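/- Let W be a finite set of n voters and let 𝔊 be a collection of subsets of W that is monotone, with W ∈ 𝔊 and ∅ ∉ 𝔊. Let {V₁, …, V_m} be an enumeration of the set of minimal winning coalitions of 𝔊. Then for every voter w ∈ W, the Shapley–Shubik index SSI_w = Σ_{S ∈ 𝔊, w decisive for S} (n − #S)! (#S − 1)! / n! (as a rational number) satisfies SSI_w = Σ_{r=1}^{m} (−1)^{r−1} Σ_{1 ≤ i₁ < … < i_r ≤ m} s_{i₁,…,i_r}(w), where s_{i₁,…,i_r}(w) = 1 / #(V_{i₁} ∪ … ∪ V_{i_r}) if w ∈ V_{i₁} ∪ … ∪ V_{i_r}, and s_{i₁,…,i_r}(w) = 0 otherwise. -/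

import Mathlib

open Finset

-- hockey-stick based Nat identity
lemma ssi_key_nat (u N : ℕ) (hu : 1 ≤ u) :
    ∑ k ∈ Finset.range (N + 1),
        N.choose k * (N - k).factorial * (u + k - 1).factorial
      = (u - 1).factorial * N.factorial * (u + N).choose u := by
  have hterm : ∀ k ∈ Finset.range (N + 1),
      N.choose k * (N - k).factorial * (u + k - 1).factorial
        = (u - 1).factorial * N.factorial * ((u - 1 + k).choose (u - 1)) := by
    intro k hk
    have hkN : k ≤ N := Nat.lt_succ_iff.mp (Finset.mem_range.mp hk)
    have h1 : u + k - 1 = u - 1 + k := by omega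
    have h2 : (u - 1 + k).choose (u - 1) * (u - 1).factorial * k.factorial
        = (u - 1 + k).factorial := by
      have := Nat.choose_mul_factorial_mul_factorial (Nat.le_add_right (u - 1) k)
      simpa [Nat.add_sub_cancel_left] using this
    have h3 : N.choose k * k.factorial * (N - k).factorial = N.factorial :=
      Nat.choose_mul_factorial_mul_factorial hkN
    calc N.choose k * (N - k).factorial * (u + k - 1).factorial
        = N.choose k * (N - k).factorial * (u - 1 + k).factorial := by rw [h1]
      _ = N.choose k * (N - k).factorial *
            ((u - 1 + k).choose (u - 1) * (u - 1).factorial * k.factorial) := by rw [h2]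
      _ = (u - 1).factorial * (N.choose k * k.factorial * (N - k).factorial) *
            ((u - 1 + k).choose (u - 1)) := by ring
      _ = (u - 1).factorial * N.factorial * ((u - 1 + k).choose (u - 1)) := by rw [h3]
  rw [Finset.sum_congr rfl hterm, ← Finset.mul_sum]
  congr 1
  have := Nat.sum_Icc_choose (u - 1 + N) (u - 1)
  have hre : ∑ k ∈ Finset.range (N + 1), (u - 1 + k).choose (u - 1)
      = ∑ i ∈ Finset.Icc (u - 1) (u - 1 + N), i.choose (u - 1) := by
    rw [← Finset.Ico_add_one_right_eq_Icc, Finset.sum_Ico_eq_sum_range]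
    have : u - 1 + N + 1 - (u - 1) = N + 1 := by omega
    rw [this]
  rw [hre, this, show u - 1 + N + 1 = u + N from by omega,
    show u - 1 + 1 = u from by omega]

-- key superset sum
lemma ssi_sum_supersets {ι : Type*} [Fintype ι] [DecidableEq ι]
    (w : ι) (U : Finset ι) (hw : w ∈ U) :
    ∑ S ∈ (Finset.univ : Finset ι).powerset.filter (fun S => U ⊆ S),
        ((Nat.factorial (Fintype.card ι - S.card) *
          Nat.factorial (S.card - 1) : ℚ) /
          Nat.factorial (Fintype.card ι))
      = 1 / U.card := by
  classical
  set n := Fintype.card ι with hn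
  have hu1 : 1 ≤ U.card := Finset.card_pos.mpr ⟨w, hw⟩
  have hun : U.card ≤ n := Finset.card_le_univ U
  set u := U.card with hu
  have hbij : ∑ S ∈ (Finset.univ : Finset ι).powerset.filter (fun S => U ⊆ S),
        ((Nat.factorial (n - S.card) * Nat.factorial (S.card - 1) : ℚ) / Nat.factorial n)
      = ∑ T ∈ ((Finset.univ : Finset ι) \ U).powerset,
        ((Nat.factorial (n - (u + T.card)) * Nat.factorial ((u + T.card) - 1) : ℚ) /
          Nat.factorial n) := by
    apply Finset.sum_nbij' (fun S => S \ U) (fun T => U ∪ T)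
    · intro S hS
      simp only [Finset.mem_filter, Finset.mem_powerset] at hS ⊢
      exact Finset.sdiff_subset_sdiff hS.1 (Finset.Subset.refl U)
    · intro T hT
      simp only [Finset.mem_powerset] at hT
      simp only [Finset.mem_filter, Finset.mem_powerset]
      exact ⟨Finset.subset_univ _, Finset.subset_union_left⟩
    · intro S hS
      simp only [Finset.mem_filter, Finset.mem_powerset] at hS
      exact Finset.union_sdiff_of_subset hS.2
    · intro T hT
      simp only [Finset.mem_powerset] at hT
      apply Finset.union_sdiff_cancel_left
      have : Disjoint U ((Finset.univ : Finset ι) \ U) := Finset.disjoint_sdiff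
      exact this.mono_right hT
    · intro S hS
      simp only [Finset.mem_filter, Finset.mem_powerset] at hS
      have hc : (S \ U).card = S.card - u := Finset.card_sdiff_of_subset hS.2
      have hcu : u ≤ S.card := Finset.card_le_card hS.2
      have : u + (S \ U).card = S.card := by omega
      rw [this]
  rw [hbij, Finset.sum_powerset]
  have hcard : ((Finset.univ : Finset ι) \ U).card = n - u := by
    rw [Finset.card_sdiff_of_subset (Finset.subset_univ U), Finset.card_univ]
  set N := n - u with hN
  have huN : u + N = n := by omega
  rw [hcard]
  have hin : ∀ j ∈ Finset.range (N + 1),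
      ∑ T ∈ Finset.powersetCard j ((Finset.univ : Finset ι) \ U),
          ((Nat.factorial (n - (u + T.card)) * Nat.factorial ((u + T.card) - 1) : ℚ) /
            Nat.factorial n)
        = (N.choose j : ℚ) *
            ((Nat.factorial (N - j) * Nat.factorial (u + j - 1) : ℚ) / Nat.factorial n) := by
    intro j hj
    have hnj : n - (u + j) = N - j := by omega
    rw [Finset.sum_congr rfl (fun T hT => by
        rw [(Finset.mem_powersetCard.mp hT).2, hnj]),
      Finset.sum_const, Finset.card_powersetCard, hcard, nsmul_eq_mul]
  rw [Finset.sum_congr rfl hin]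
  have hstep : ∑ j ∈ Finset.range (N + 1), (N.choose j : ℚ) *
        ((Nat.factorial (N - j) * Nat.factorial (u + j - 1) : ℚ) / Nat.factorial n)
      = ((((u - 1).factorial * N.factorial * (u + N).choose u : ℕ)) : ℚ) / Nat.factorial n := by
    rw [← ssi_key_nat u N hu1, Nat.cast_sum, Finset.sum_div]
    exact Finset.sum_congr rfl fun j _ => by push_cast; ring
  rw [hstep]
  have hnat : ((u - 1).factorial * N.factorial * (u + N).choose u) * u = Nat.factorial n := by
    have h1 : u * (u - 1).factorial = u.factorial := Nat.mul_factorial_pred (by omega)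
    have h2 : (u + N).choose u * u.factorial * N.factorial = (u + N).factorial := by
      have := Nat.choose_mul_factorial_mul_factorial (Nat.le_add_right u N)
      simpa [Nat.add_sub_cancel_left] using this
    calc ((u - 1).factorial * N.factorial * (u + N).choose u) * u
        = (u + N).choose u * (u * (u - 1).factorial) * N.factorial := by ring
      _ = (u + N).choose u * u.factorial * N.factorial := by rw [h1]
      _ = (u + N).factorial := h2
      _ = Nat.factorial n := by rw [huN]
  rw [div_eq_div_iff (by positivity) (by positivity : (u : ℚ) ≠ 0)]
  · push_cast [← hnat]; ring


/-- **Theorem 2 (SSI-direct-calculation formula).**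
In a voting system `(W, 𝔊)` with minimal winning coalitions `V 1, …, V m`,
the Shapley–Shubik index
`SSI_w = ∑_{S ∈ 𝔊, w decisive for S} (n − #S)!(#S − 1)!/n!` of any voter `w`
equals `∑_{r=1}^m (−1)^{r−1} ∑_{1 ≤ i₁ < ⋯ < i_r ≤ m} s_{i₁,…,i_r}(w)`,
where `s_{i₁,…,i_r}(w) = 1/#(V_{i₁} ∪ ⋯ ∪ V_{i_r})` if
`w ∈ V_{i₁} ∪ ⋯ ∪ V_{i_r}` and `0` otherwise. -/
theorem shapley_shubik_direct_calculation
    {ι : Type*} [Fintype ι] [DecidableEq ι] [Nonempty ι]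
    (G : Finset (Finset ι))
    (hmono : ∀ A ∈ G, ∀ B : Finset ι, A ⊆ B → B ∈ G)
    (htop : (Finset.univ : Finset ι) ∈ G)
    (hbot : (∅ : Finset ι) ∉ G)
    (m : ℕ) (V : Fin m → Finset ι)
    (hVinj : Function.Injective V)
    (hVenum : ∀ A : Finset ι,
      (∃ i : Fin m, V i = A) ↔ (A ∈ G ∧ ∀ v ∈ A, A.erase v ∉ G))
    (w : ι) :
    (∑ S ∈ G.filter (fun S => w ∈ S ∧ S.erase w ∉ G),
        ((Nat.factorial (Fintype.card ι - S.card) *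
          Nat.factorial (S.card - 1) : ℚ) /
          Nat.factorial (Fintype.card ι))) =
      ∑ r ∈ Finset.Icc 1 m, (-1 : ℚ) ^ (r - 1) *
        ∑ I ∈ Finset.powersetCard r (Finset.univ : Finset (Fin m)),
          (if w ∈ I.biUnion V
            then (1 : ℚ) / (I.biUnion V).card
            else 0) := by
  classical
  -- characterization of winning coalitions
  have hGch : ∀ S : Finset ι, S ∈ G ↔ ∃ i, V i ⊆ S := by
    intro S
    constructor
    · have H : ∀ k, ∀ S : Finset ι, S.card ≤ k → S ∈ G → ∃ i, V i ⊆ S := by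
        intro k
        induction k with
        | zero =>
          intro S hc hS
          have : S = ∅ := Finset.card_eq_zero.mp (Nat.le_zero.mp hc)
          exact absurd (this ▸ hS) hbot
        | succ k ih =>
          intro S hc hS
          by_cases hmin : ∀ v ∈ S, S.erase v ∉ G
          · obtain ⟨i, hi⟩ := (hVenum S).mpr ⟨hS, hmin⟩
            exact ⟨i, hi ▸ Finset.Subset.refl _⟩
          · push_neg at hmin
            obtain ⟨v, hv, he⟩ := hmin
            obtain ⟨i, hi⟩ := ih (S.erase v)
              (by have := Finset.card_erase_lt_of_mem hv; omega) he
            exact ⟨i, hi.trans (Finset.erase_subset _ _)⟩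
      exact H S.card S le_rfl
    · rintro ⟨i, hi⟩
      exact hmono _ ((hVenum (V i)).mp ⟨i, rfl⟩).1 _ hi
  set n := Fintype.card ι with hn
  set q : Finset ι → ℚ := fun S =>
    ((Nat.factorial (n - S.card) * Nat.factorial (S.card - 1) : ℚ) /
      Nat.factorial n) with hq
  -- rewrite the sum over G as a sum over all subsets
  have hset : G.filter (fun S => w ∈ S ∧ S.erase w ∉ G)
      = (Finset.univ : Finset ι).powerset.filter
          (fun S => w ∈ S ∧ S ∈ G ∧ S.erase w ∉ G) := by
    ext S
    simp only [Finset.mem_filter, Finset.mem_powerset]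
    constructor
    · rintro ⟨h1, h2, h3⟩; exact ⟨Finset.subset_univ _, h2, h1, h3⟩
    · rintro ⟨_, h2, h3, h4⟩; exact ⟨h3, h2, h4⟩
  rw [show (∑ S ∈ G.filter (fun S => w ∈ S ∧ S.erase w ∉ G),
        ((Nat.factorial (n - S.card) * Nat.factorial (S.card - 1) : ℚ) /
          Nat.factorial n))
      = ∑ S ∈ (Finset.univ : Finset ι).powerset.filter
          (fun S => w ∈ S ∧ S ∈ G ∧ S.erase w ∉ G), q S from by rw [hset],
    Finset.sum_filter]
  -- indicator of membership in G via products
  have hprod : ∀ T : Finset ι,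
      ∏ i ∈ (Finset.univ : Finset (Fin m)),
        ((1 : ℚ) - if V i ⊆ T then 1 else 0)
      = if T ∈ G then 0 else 1 := by
    intro T
    by_cases hT : T ∈ G
    · obtain ⟨i, hi⟩ := (hGch T).mp hT
      rw [if_pos hT]
      exact Finset.prod_eq_zero (Finset.mem_univ i) (by simp [hi])
    · have hni : ∀ i : Fin m, ¬ V i ⊆ T := fun i hi => hT ((hGch T).mpr ⟨i, hi⟩)
      rw [if_neg hT]
      exact Finset.prod_eq_one fun i _ => by simp [hni i]
  -- expansion of the product (inclusion-exclusion)
  have hexp : ∀ T : Finset ι,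
      ∏ i ∈ (Finset.univ : Finset (Fin m)),
        ((1 : ℚ) - if V i ⊆ T then 1 else 0)
      = ∑ I ∈ (Finset.univ : Finset (Fin m)).powerset,
          (-1 : ℚ) ^ I.card * (if I.biUnion V ⊆ T then 1 else 0) := by
    intro T
    have h1 : ∏ i ∈ (Finset.univ : Finset (Fin m)),
        ((1 : ℚ) - if V i ⊆ T then 1 else 0)
      = ∑ I ∈ (Finset.univ : Finset (Fin m)).powerset,
          ∏ i ∈ I, (-(if V i ⊆ T then (1 : ℚ) else 0)) := by
      have := Finset.prod_add (fun i : Fin m => -(if V i ⊆ T then (1 : ℚ) else 0))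
        (fun _ => (1 : ℚ)) Finset.univ
      simp only [Finset.prod_const_one, mul_one] at this
      rw [← this]
      exact Finset.prod_congr rfl fun i _ => by ring
    rw [h1]
    refine Finset.sum_congr rfl fun I _ => ?_
    have h2 : ∏ i ∈ I, (-(if V i ⊆ T then (1 : ℚ) else 0))
        = (-1 : ℚ) ^ I.card * ∏ i ∈ I, (if V i ⊆ T then (1 : ℚ) else 0) := by
      rw [← Finset.prod_const (-1 : ℚ), ← Finset.prod_mul_distrib]
      exact Finset.prod_congr rfl fun i _ => by ring
    rw [h2]
    congr 1
    by_cases h : I.biUnion V ⊆ T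
    · rw [if_pos h]
      exact Finset.prod_eq_one fun i hi =>
        if_pos ((Finset.subset_biUnion_of_mem V hi).trans h)
    · rw [if_neg h]
      rw [Finset.biUnion_subset] at h
      push_neg at h
      obtain ⟨i, hi, hVi⟩ := h
      exact Finset.prod_eq_zero hi (if_neg hVi)
  -- pointwise inclusion-exclusion identity for the decisiveness indicator
  have hpoint : ∀ S : Finset ι,
      (if w ∈ S ∧ S ∈ G ∧ S.erase w ∉ G then q S else 0)
      = ∑ I ∈ (Finset.univ : Finset (Fin m)).powerset,
          (-1 : ℚ) ^ (I.card + 1) *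
            ((if w ∈ I.biUnion V ∧ I.biUnion V ⊆ S then (1 : ℚ) else 0) * q S) := by
    intro S
    have herase : S.erase w ∈ G → S ∈ G :=
      fun h => hmono _ h _ (Finset.erase_subset _ _)
    have hkey2 : (if w ∈ S ∧ S ∈ G ∧ S.erase w ∉ G then (1 : ℚ) else 0)
        = ∑ I ∈ (Finset.univ : Finset (Fin m)).powerset,
            (-1 : ℚ) ^ (I.card + 1) *
              (if w ∈ I.biUnion V ∧ I.biUnion V ⊆ S then (1 : ℚ) else 0) := by
      have step1 : (if w ∈ S ∧ S ∈ G ∧ S.erase w ∉ G then (1 : ℚ) else 0)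
          = (if w ∈ S then (1 : ℚ) else 0) *
              ((if S.erase w ∈ G then (0 : ℚ) else 1) -
                (if S ∈ G then (0 : ℚ) else 1)) := by
        by_cases h1 : w ∈ S <;> by_cases h2 : S ∈ G <;> by_cases h3 : S.erase w ∈ G <;>
          simp [h1, h2, h3] <;> exact h2 (herase h3)
      rw [step1, ← hprod, ← hprod, hexp, hexp, ← Finset.sum_sub_distrib,
        Finset.mul_sum]
      refine Finset.sum_congr rfl fun I _ => ?_
      set U := I.biUnion V with hU
      by_cases hwS : w ∈ S
      · by_cases hwU : w ∈ U
        · have h1 : ¬ U ⊆ S.erase w := fun h => (Finset.mem_erase.mp (h hwU)).1 rfl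
          by_cases h2 : U ⊆ S <;> simp [h1, h2, hwU, hwS, pow_succ] <;> ring
        · have hiff : U ⊆ S.erase w ↔ U ⊆ S := by
            rw [Finset.subset_erase]
            exact ⟨fun h => h.1, fun h => ⟨h, hwU⟩⟩
          by_cases h2 : U ⊆ S <;> simp [hiff, h2, hwU, hwS]
      · have hno : ¬ (w ∈ U ∧ U ⊆ S) := fun ⟨ha, hb⟩ => hwS (hb ha)
        simp [hwS, hno]
    calc (if w ∈ S ∧ S ∈ G ∧ S.erase w ∉ G then q S else 0)
        = (if w ∈ S ∧ S ∈ G ∧ S.erase w ∉ G then (1 : ℚ) else 0) * q S := by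
          by_cases h : w ∈ S ∧ S ∈ G ∧ S.erase w ∉ G <;> simp [h]
      _ = (∑ I ∈ (Finset.univ : Finset (Fin m)).powerset,
            (-1 : ℚ) ^ (I.card + 1) *
              (if w ∈ I.biUnion V ∧ I.biUnion V ⊆ S then (1 : ℚ) else 0)) * q S := by
          rw [hkey2]
      _ = _ := by rw [Finset.sum_mul]; exact Finset.sum_congr rfl fun I _ => by ring
  rw [Finset.sum_congr rfl fun S _ => hpoint S, Finset.sum_comm]
  -- inner sums
  have hinner : ∀ I : Finset (Fin m),
      ∑ S ∈ (Finset.univ : Finset ι).powerset,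
        (-1 : ℚ) ^ (I.card + 1) *
          ((if w ∈ I.biUnion V ∧ I.biUnion V ⊆ S then (1 : ℚ) else 0) * q S)
      = (-1 : ℚ) ^ (I.card + 1) *
          (if w ∈ I.biUnion V then (1 : ℚ) / (I.biUnion V).card else 0) := by
    intro I
    rw [← Finset.mul_sum]
    congr 1
    by_cases hwU : w ∈ I.biUnion V
    · rw [if_pos hwU, ← ssi_sum_supersets w (I.biUnion V) hwU, Finset.sum_filter]
      exact Finset.sum_congr rfl fun S _ => by
        by_cases h : I.biUnion V ⊆ S <;> simp [h, hwU, hq, hn]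
    · rw [if_neg hwU]
      refine Finset.sum_eq_zero fun S _ => ?_
      simp [hwU]
  rw [Finset.sum_congr rfl fun I _ => hinner I, Finset.sum_powerset]
  have hcards : (Finset.univ : Finset (Fin m)).card = m := by
    rw [Finset.card_univ, Fintype.card_fin]
  rw [hcards]
  have hsplit : Finset.range (m + 1) = insert 0 (Finset.Icc 1 m) := by
    ext x; simp [Finset.mem_range, Finset.mem_Icc]; omega
  rw [hsplit, Finset.sum_insert (by simp)]
  have hzero : ∑ I ∈ Finset.powersetCard 0 (Finset.univ : Finset (Fin m)),
      (-1 : ℚ) ^ (I.card + 1) *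
        (if w ∈ I.biUnion V then (1 : ℚ) / (I.biUnion V).card else 0) = 0 := by
    rw [Finset.powersetCard_zero, Finset.sum_singleton]
    simp
  rw [hzero, zero_add]
  refine Finset.sum_congr rfl fun r hr => ?_
  have hr1 : 1 ≤ r := (Finset.mem_Icc.mp hr).1
  rw [Finset.mul_sum]
  refine Finset.sum_congr rfl fun I hI => ?_
  rw [(Finset.mem_powersetCard.mp hI).2]
  congr 1
  rw [show r + 1 = (r - 1) + 2 from by omega, pow_add]
  ring
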